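/- Let (V,⟨·,·⟩,A) be a Riemannian 0-model and suppose there exists an orthogonal direct sum decomposition V = V₁ ⊕ … ⊕ V_k ⊕ W with dim V_i = 2 for every i such that A(x,y,z,w) = 0 unless all four vectors x, y, z, w lie in one and the same summand V_i. Then the model is skew Tsankov, i.e. 𝒜(x,y) ∘ 𝒜(u,v) = 𝒜(u,v) ∘ 𝒜(x,y) for all x,y,u,v ∈ V. -/

import Mathlib

open scoped RealInnerProductSpace

/-- If a Riemannian `0`-model `(V, ⟨·,·⟩, A)` admits an orthogonal direct sum
decomposition `V = V₁ ⊕ ⋯ ⊕ V_k ⊕ W` with `dim V_i = 2` for every `i` such that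
`A(x,y,z,w) = 0` unless all four vectors lie in one and the same summand `V_i`,
then the model is skew Tsankov: the skew-symmetric curvature operators commute. -/
theorem skewTsankov_of_decomposition
    {V : Type*} [NormedAddCommGroup V] [InnerProductSpace ℝ V]
    [FiniteDimensional ℝ V]
    (A : V →ₗ[ℝ] V →ₗ[ℝ] V →ₗ[ℝ] V →ₗ[ℝ] ℝ)
    (hsymm : ∀ x y z w : V, A x y z w = A z w x y)
    (hanti : ∀ x y z w : V, A x y z w = - A y x z w)
    (hbianchi : ∀ x y z w : V, A x y z w + A y z x w + A z x y w = 0)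
    (𝓐 : V → V → (V →ₗ[ℝ] V))
    (h𝓐 : ∀ x y z w : V, ⟪𝓐 x y z, w⟫ = A x y z w)
    (k : ℕ) (Vs : Fin k → Submodule ℝ V) (W : Submodule ℝ V)
    (horth : ∀ i j : Fin k, i ≠ j → ∀ x ∈ Vs i, ∀ y ∈ Vs j, ⟪x, y⟫ = 0)
    (horthW : ∀ i : Fin k, ∀ x ∈ Vs i, ∀ y ∈ W, ⟪x, y⟫ = 0)
    (hspan : (⨆ i, Vs i) ⊔ W = ⊤)
    (hdim : ∀ i, Module.finrank ℝ (Vs i) = 2)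
    (hvanish : ∀ x y z w : V, A x y z w ≠ 0 →
      ∃ i, x ∈ Vs i ∧ y ∈ Vs i ∧ z ∈ Vs i ∧ w ∈ Vs i) :
    ∀ x y u v : V, (𝓐 x y) ∘ₗ (𝓐 u v) = (𝓐 u v) ∘ₗ (𝓐 x y) := by
  classical
  -- a nonzero vector cannot lie in two distinct summands
  have mem_eq : ∀ (i m : Fin k) (a : V), a ∈ Vs i → a ∈ Vs m → a ≠ 0 → i = m := by
    intro i m a hi hm ha
    by_contra h
    exact ha (inner_self_eq_zero.mp (horth i m h a hi a hm))
  have memW : ∀ (m : Fin k) (a : V), a ∈ Vs m → a ∈ W → a = 0 := fun m a h1 h2 =>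
    inner_self_eq_zero.mp (horthW m a h1 a h2)
  -- vanishing lemmas: W in any slot
  have hW1 : ∀ a ∈ W, ∀ b z w : V, A a b z w = 0 := by
    intro a ha b z w
    by_contra h
    obtain ⟨m, hm, -, -, -⟩ := hvanish a b z w h
    rw [memW m a hm ha] at h; simp at h
  have hW2 : ∀ b ∈ W, ∀ a z w : V, A a b z w = 0 := by
    intro b hb a z w
    by_contra h
    obtain ⟨m, -, hm, -, -⟩ := hvanish a b z w h
    rw [memW m b hm hb] at h; simp at h
  have hW4 : ∀ w ∈ W, ∀ a b z : V, A a b z w = 0 := by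
    intro w hw a b z
    by_contra h
    obtain ⟨m, -, -, -, hm⟩ := hvanish a b z w h
    rw [memW m w hm hw] at h; simp at h
  -- vanishing lemmas: two vectors in different summands
  have hV12 : ∀ i j : Fin k, i ≠ j → ∀ a ∈ Vs i, ∀ b ∈ Vs j, ∀ z w : V, A a b z w = 0 := by
    intro i j hij a ha b hb z w
    by_contra h
    obtain ⟨m, hm1, hm2, -, -⟩ := hvanish a b z w h
    have ha0 : a ≠ 0 := by rintro rfl; simp at h
    have hb0 : b ≠ 0 := by rintro rfl; simp at h
    exact hij ((mem_eq i m a ha hm1 ha0).trans (mem_eq j m b hb hm2 hb0).symm)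
  have hV13 : ∀ i j : Fin k, i ≠ j → ∀ a ∈ Vs i, ∀ z ∈ Vs j, ∀ b w : V, A a b z w = 0 := by
    intro i j hij a ha z hz b w
    by_contra h
    obtain ⟨m, hm1, -, hm3, -⟩ := hvanish a b z w h
    have ha0 : a ≠ 0 := by rintro rfl; simp at h
    have hz0 : z ≠ 0 := by rintro rfl; simp at h
    exact hij ((mem_eq i m a ha hm1 ha0).trans (mem_eq j m z hz hm3 hz0).symm)
  have hV14 : ∀ i j : Fin k, i ≠ j → ∀ a ∈ Vs i, ∀ w ∈ Vs j, ∀ b z : V, A a b z w = 0 := by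
    intro i j hij a ha w hw b z
    by_contra h
    obtain ⟨m, hm1, -, -, hm4⟩ := hvanish a b z w h
    have ha0 : a ≠ 0 := by rintro rfl; simp at h
    have hw0 : w ≠ 0 := by rintro rfl; simp at h
    exact hij ((mem_eq i m a ha hm1 ha0).trans (mem_eq j m w hw hm4 hw0).symm)
  -- decomposition of an arbitrary vector
  have hdecomp : ∀ z : V, ∃ (f : Fin k → V) (g : V),
      (∀ i, f i ∈ Vs i) ∧ g ∈ W ∧ z = (∑ i, f i) + g := by
    intro z
    have hz : z ∈ (⨆ i, Vs i) ⊔ W := by rw [hspan]; trivial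
    obtain ⟨p, hp, q, hq, hpq⟩ := Submodule.mem_sup.mp hz
    have hpdec : ∃ f : Fin k → V, (∀ i, f i ∈ Vs i) ∧ p = ∑ i, f i := by
      refine Submodule.iSup_induction (motive := fun p => ∃ f : Fin k → V,
        (∀ i, f i ∈ Vs i) ∧ p = ∑ i, f i) Vs hp ?_ ?_ ?_
      · intro i x hx
        refine ⟨fun j => if j = i then x else 0, fun j => ?_, ?_⟩
        · by_cases hji : j = i
          · subst hji; simp [hx]
          · simp [hji]
        · simp
      · exact ⟨0, fun i => (Vs i).zero_mem, by simp⟩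
      · rintro x y ⟨f, hf, rfl⟩ ⟨g, hg, rfl⟩
        exact ⟨f + g, fun i => (Vs i).add_mem (hf i) (hg i), by simp [Finset.sum_add_distrib]⟩
    obtain ⟨f, hf, rfl⟩ := hpdec
    exact ⟨f, q, hf, hq, hpq.symm⟩
  -- splitting of the curvature operator
  have hsplit : ∀ (fa fb : Fin k → V) (ga gb a b : V),
      (∀ i, fa i ∈ Vs i) → (∀ i, fb i ∈ Vs i) → ga ∈ W → gb ∈ W →
      a = (∑ i, fa i) + ga → b = (∑ i, fb i) + gb →
      ∀ z, 𝓐 a b z = ∑ i, 𝓐 (fa i) (fb i) z := by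
    intro fa fb ga gb a b hfa hfb hga hgb ha hb z
    refine ext_inner_right ℝ fun w => ?_
    rw [sum_inner]
    simp only [h𝓐]
    rw [ha, hb]
    simp only [map_add, map_sum, LinearMap.add_apply, LinearMap.sum_apply]
    have e1 : ∀ j, A ga (fb j) z w = 0 := fun j => hW1 ga hga (fb j) z w
    have e2 : A ga gb z w = 0 := hW1 ga hga gb z w
    have e3 : ∀ i, A (fa i) gb z w = 0 := fun i => hW2 gb hgb (fa i) z w
    simp only [e1, e2, e3, Finset.sum_const_zero, add_zero]
    refine Finset.sum_congr rfl fun i _ => ?_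
    exact Finset.sum_eq_single_of_mem i (Finset.mem_univ i)
      (fun j _ hji => hV12 j i hji (fa j) (hfa j) (fb i) (hfb i) z w)
  -- the image of 𝓐 a b lies in Vs i when a, b ∈ Vs i
  have himg : ∀ (i : Fin k) (a b : V), a ∈ Vs i → b ∈ Vs i → ∀ z, 𝓐 a b z ∈ Vs i := by
    intro i a b ha hb z
    set q := 𝓐 a b z with hqdef
    have hqW : ∀ w ∈ W, ⟪q, w⟫ = 0 := fun w hw => by
      rw [hqdef, h𝓐]; exact hW4 w hw a b z
    have hqV : ∀ j : Fin k, j ≠ i → ∀ w ∈ Vs j, ⟪q, w⟫ = 0 := fun j hj w hw => by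
      rw [hqdef, h𝓐]; exact hV14 i j (Ne.symm hj) a ha w hw b z
    obtain ⟨f, g, hf, hg, hq_eq⟩ := hdecomp q
    have hrw : q - f i = (∑ j ∈ Finset.univ.erase i, f j) + g := by
      rw [hq_eq, ← Finset.add_sum_erase _ f (Finset.mem_univ i)]
      abel
    have h2 : ⟪q, q - f i⟫ = 0 := by
      rw [hrw, inner_add_right, inner_sum]
      rw [Finset.sum_eq_zero fun j hj =>
        hqV j (Finset.ne_of_mem_erase hj) (f j) (hf j), hqW g hg, add_zero]
    have h3 : ⟪f i, q - f i⟫ = 0 := by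
      rw [hrw, inner_add_right, inner_sum]
      rw [Finset.sum_eq_zero fun j hj =>
        horth i j (Ne.symm (Finset.ne_of_mem_erase hj)) (f i) (hf i) (f j) (hf j),
        horthW i (f i) (hf i) g hg, add_zero]
    have h4 : ⟪q - f i, q - f i⟫ = 0 := by
      rw [inner_sub_left, h2, h3, sub_zero]
    have hq : q = f i := sub_eq_zero.mp (inner_self_eq_zero.mp h4)
    rw [hq]; exact hf i
  -- 𝓐 a b kills other summands
  have hkillV : ∀ (i j : Fin k), i ≠ j → ∀ a b : V, a ∈ Vs i → b ∈ Vs i →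
      ∀ p ∈ Vs j, 𝓐 a b p = 0 := by
    intro i j hij a b ha hb p hp
    refine ext_inner_right ℝ fun w => ?_
    rw [h𝓐, inner_zero_left]
    exact hV13 i j hij a ha p hp b w
  -- skewness of A in the last two slots
  have hA34 : ∀ a b z w : V, A a b z w = - A a b w z := by
    intro a b z w
    rw [hsymm a b z w, hanti z w a b, hsymm w z a b]
  have hskew : ∀ a b z w : V, ⟪𝓐 a b z, w⟫ = - ⟪𝓐 a b w, z⟫ := by
    intro a b z w
    rw [h𝓐, h𝓐, hA34]
  -- orthonormal expansion on each 2-dimensional summand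
  have hbasis : ∀ i : Fin k, ∃ e₁ e₂ : V, e₁ ∈ Vs i ∧ e₂ ∈ Vs i ∧
      (∀ p ∈ Vs i, p = ⟪e₁, p⟫ • e₁ + ⟪e₂, p⟫ • e₂) := by
    intro i
    let b : OrthonormalBasis (Fin 2) ℝ (Vs i) :=
      (stdOrthonormalBasis ℝ (Vs i)).reindex (finCongr (hdim i))
    refine ⟨(b 0 : V), (b 1 : V), (b 0).2, (b 1).2, fun p hp => ?_⟩
    have hs := b.sum_repr' (⟨p, hp⟩ : Vs i)
    rw [Fin.sum_univ_two] at hs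
    have hcoe := congrArg (Submodule.subtype (Vs i)) hs
    simp only [map_add, map_smul, Submodule.coe_subtype] at hcoe
    rw [Submodule.coe_inner, Submodule.coe_inner] at hcoe
    exact hcoe.symm
  -- commutation of operators supported on a single 2-dimensional summand
  have hcomm : ∀ (i : Fin k) (a b c d : V), a ∈ Vs i → b ∈ Vs i → c ∈ Vs i → d ∈ Vs i →
      ∀ z, 𝓐 a b (𝓐 c d z) = 𝓐 c d (𝓐 a b z) := by
    intro i a b c d ha hb hc hd z
    obtain ⟨e₁, e₂, he₁, he₂, hexp⟩ := hbasis i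
    set B := 𝓐 a b with hB
    set C := 𝓐 c d with hC
    have hBskew : ∀ z w, ⟪B z, w⟫ = - ⟪B w, z⟫ := fun z w => hskew a b z w
    have hCskew : ∀ z w, ⟪C z, w⟫ = - ⟪C w, z⟫ := fun z w => hskew c d z w
    set β := ⟪e₂, B e₁⟫ with hβ
    set γ := ⟪e₂, C e₁⟫ with hγ
    have hBe1 : B e₁ = β • e₂ := by
      have h0 : ⟪e₁, B e₁⟫ = 0 := by
        have := hBskew e₁ e₁; rw [real_inner_comm]; linarith
      rw [hexp (B e₁) (himg i a b ha hb e₁), h0, zero_smul, zero_add]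
    have hCe1 : C e₁ = γ • e₂ := by
      have h0 : ⟪e₁, C e₁⟫ = 0 := by
        have := hCskew e₁ e₁; rw [real_inner_comm]; linarith
      rw [hexp (C e₁) (himg i c d hc hd e₁), h0, zero_smul, zero_add]
    have hBe2 : B e₂ = (-β) • e₁ := by
      have h0 : ⟪e₂, B e₂⟫ = 0 := by
        have := hBskew e₂ e₂; rw [real_inner_comm]; linarith
      have h1 : ⟪e₁, B e₂⟫ = -β := by
        rw [real_inner_comm, hBskew e₂ e₁, ← real_inner_comm (B e₁) e₂, hβ]
      rw [hexp (B e₂) (himg i a b ha hb e₂), h0, h1, zero_smul, add_zero]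
    have hCe2 : C e₂ = (-γ) • e₁ := by
      have h0 : ⟪e₂, C e₂⟫ = 0 := by
        have := hCskew e₂ e₂; rw [real_inner_comm]; linarith
      have h1 : ⟪e₁, C e₂⟫ = -γ := by
        rw [real_inner_comm, hCskew e₂ e₁, ← real_inner_comm (C e₁) e₂, hγ]
      rw [hexp (C e₂) (himg i c d hc hd e₂), h0, h1, zero_smul, add_zero]
    have hBp : ∀ p : V, B p = (-(β * ⟪e₂, p⟫)) • e₁ + (β * ⟪e₁, p⟫) • e₂ := by
      intro p
      have h1 : ⟪e₁, B p⟫ = -(β * ⟪e₂, p⟫) := by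
        rw [real_inner_comm, hBskew p e₁, hBe1, real_inner_smul_left]
      have h2 : ⟪e₂, B p⟫ = β * ⟪e₁, p⟫ := by
        rw [real_inner_comm, hBskew p e₂, hBe2, real_inner_smul_left]
        ring
      rw [hexp (B p) (himg i a b ha hb p), h1, h2]
    have hCp : ∀ p : V, C p = (-(γ * ⟪e₂, p⟫)) • e₁ + (γ * ⟪e₁, p⟫) • e₂ := by
      intro p
      have h1 : ⟪e₁, C p⟫ = -(γ * ⟪e₂, p⟫) := by
        rw [real_inner_comm, hCskew p e₁, hCe1, real_inner_smul_left]
      have h2 : ⟪e₂, C p⟫ = γ * ⟪e₁, p⟫ := by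
        rw [real_inner_comm, hCskew p e₂, hCe2, real_inner_smul_left]
        ring
      rw [hexp (C p) (himg i c d hc hd p), h1, h2]
    rw [hCp z, map_add, map_smul, map_smul, hBe1, hBe2,
        hBp z, map_add, map_smul, map_smul, hCe1, hCe2]
    module
  -- final assembly
  intro x y u v
  obtain ⟨fx, gx, hfx, hgx, hx⟩ := hdecomp x
  obtain ⟨fy, gy, hfy, hgy, hy⟩ := hdecomp y
  obtain ⟨fu, gu, hfu, hgu, hu⟩ := hdecomp u
  obtain ⟨fv, gv, hfv, hgv, hv⟩ := hdecomp v
  apply LinearMap.ext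
  intro z
  simp only [LinearMap.comp_apply]
  have L : 𝓐 x y (𝓐 u v z) = ∑ j, 𝓐 (fx j) (fy j) (𝓐 (fu j) (fv j) z) := by
    rw [hsplit fu fv gu gv u v hfu hfv hgu hgv hu hv z, map_sum]
    rw [Finset.sum_congr rfl fun j _ =>
      hsplit fx fy gx gy x y hfx hfy hgx hgy hx hy (𝓐 (fu j) (fv j) z)]
    refine Finset.sum_congr rfl fun j _ => ?_
    exact Finset.sum_eq_single_of_mem j (Finset.mem_univ j)
      (fun i _ hij => hkillV i j hij (fx i) (fy i) (hfx i) (hfy i) _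
        (himg j (fu j) (fv j) (hfu j) (hfv j) z))
  have R : 𝓐 u v (𝓐 x y z) = ∑ j, 𝓐 (fu j) (fv j) (𝓐 (fx j) (fy j) z) := by
    rw [hsplit fx fy gx gy x y hfx hfy hgx hgy hx hy z, map_sum]
    rw [Finset.sum_congr rfl fun j _ =>
      hsplit fu fv gu gv u v hfu hfv hgu hgv hu hv (𝓐 (fx j) (fy j) z)]
    refine Finset.sum_congr rfl fun j _ => ?_
    exact Finset.sum_eq_single_of_mem j (Finset.mem_univ j)
      (fun i _ hij => hkillV i j hij (fu i) (fv i) (hfu i) (hfv i) _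
        (himg j (fx j) (fy j) (hfx j) (hfy j) z))
  rw [L, R]
  exact Finset.sum_congr rfl fun j _ =>
    hcomm j (fx j) (fy j) (fu j) (fv j) (hfx j) (hfy j) (hfu j) (hfv j) z
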